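/- arXiv:2007.13589 — 3 statements merged into one kernel-verified Lean document; each statement's English description precedes it below -/
import Mathlib

section
/- Let c be a real number and let λ, λ₂, λ₃, λ₄, ω₂, ω₃, ω₄ : I → ℝ be twice differentiable functions on an open interval I satisfying λ₂ + λ₃ + λ₄ = -3λ, λᵢ' = (λᵢ - λ) ωᵢ, and ωᵢ' = ωᵢ² + λ λᵢ + c for i = 2,3,4. Then with T = ω₂ + ω₃ + ω₄, one has ω₂³ + ω₃³ + ω₄³ = (1/2) T'' - (λ² + c) T + 6 λ λ' on I. -/
theorem f3_formula (c : ℝ) (I : Set ℝ) (hI : IsOpen I)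
    (lam l2 l3 l4 w2 w3 w4 : ℝ → ℝ)
    (hlam : ContDiffOn ℝ 2 lam I)
    (hl2 : ContDiffOn ℝ 2 l2 I) (hl3 : ContDiffOn ℝ 2 l3 I) (hl4 : ContDiffOn ℝ 2 l4 I)
    (hw2' : ContDiffOn ℝ 2 w2 I) (hw3' : ContDiffOn ℝ 2 w3 I) (hw4' : ContDiffOn ℝ 2 w4 I)
    (hsum : ∀ t ∈ I, l2 t + l3 t + l4 t = -3 * lam t)
    (hdl2 : ∀ t ∈ I, HasDerivAt l2 ((l2 t - lam t) * w2 t) t)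
    (hdl3 : ∀ t ∈ I, HasDerivAt l3 ((l3 t - lam t) * w3 t) t)
    (hdl4 : ∀ t ∈ I, HasDerivAt l4 ((l4 t - lam t) * w4 t) t)
    (hw2 : ∀ t ∈ I, HasDerivAt w2 ((w2 t) ^ 2 + lam t * l2 t + c) t)
    (hw3 : ∀ t ∈ I, HasDerivAt w3 ((w3 t) ^ 2 + lam t * l3 t + c) t)
    (hw4 : ∀ t ∈ I, HasDerivAt w4 ((w4 t) ^ 2 + lam t * l4 t + c) t) :
    ∀ t ∈ I, (w2 t) ^ 3 + (w3 t) ^ 3 + (w4 t) ^ 3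
      = (1 / 2) * deriv (deriv (fun s => w2 s + w3 s + w4 s)) t
        - ((lam t) ^ 2 + c) * (w2 t + w3 t + w4 t)
        + 6 * lam t * deriv lam t := by
  intro t ht
  have htn : I ∈ nhds t := hI.mem_nhds ht
  -- derivative of lam
  have hlamd : HasDerivAt lam
      (-(1/3) * ((l2 t - lam t) * w2 t + ((l3 t - lam t) * w3 t + (l4 t - lam t) * w4 t))) t := by
    have hg : HasDerivAt (fun s => -(1/3) * (l2 s + (l3 s + l4 s)))
        (-(1/3) * ((l2 t - lam t) * w2 t + ((l3 t - lam t) * w3 t + (l4 t - lam t) * w4 t))) t :=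
      ((hdl2 t ht).add ((hdl3 t ht).add (hdl4 t ht))).const_mul _
    refine hg.congr_of_eventuallyEq ?_
    filter_upwards [htn] with s hs
    have := hsum s hs; linarith
  -- F = derivative of T on I
  set F : ℝ → ℝ := fun s => w2 s ^ 2 + w3 s ^ 2 + w4 s ^ 2 + lam s * (l2 s + (l3 s + l4 s)) + 3 * c
    with hF
  have hT : ∀ s ∈ I, HasDerivAt (fun u => w2 u + w3 u + w4 u) (F s) s := by
    intro s hs
    have := ((hw2 s hs).add (hw3 s hs)).add (hw4 s hs)
    refine this.congr_deriv ?_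
    show _ = w2 s ^ 2 + w3 s ^ 2 + w4 s ^ 2 + lam s * (l2 s + (l3 s + l4 s)) + 3 * c; ring
  have hTF : deriv (fun s => w2 s + w3 s + w4 s) =ᶠ[nhds t] F := by
    filter_upwards [htn] with s hs
    exact (hT s hs).deriv
  have hF' : HasDerivAt F
      (2 * w2 t ^ 1 * ((w2 t) ^ 2 + lam t * l2 t + c)
       + 2 * w3 t ^ 1 * ((w3 t) ^ 2 + lam t * l3 t + c)
       + 2 * w4 t ^ 1 * ((w4 t) ^ 2 + lam t * l4 t + c)
       + ((-(1/3) * ((l2 t - lam t) * w2 t + ((l3 t - lam t) * w3 t + (l4 t - lam t) * w4 t)))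
            * (l2 t + (l3 t + l4 t))
          + lam t * ((l2 t - lam t) * w2 t + ((l3 t - lam t) * w3 t + (l4 t - lam t) * w4 t)))
       + 0) t := by
    exact (((((hw2 t ht).pow 2).add ((hw3 t ht).pow 2)).add ((hw4 t ht).pow 2)).add
      (hlamd.mul ((hdl2 t ht).add ((hdl3 t ht).add (hdl4 t ht))))).add (hasDerivAt_const t (3*c))
  have hd2 : deriv (deriv (fun s => w2 s + w3 s + w4 s)) t
      = 2 * w2 t ^ 1 * ((w2 t) ^ 2 + lam t * l2 t + c)
       + 2 * w3 t ^ 1 * ((w3 t) ^ 2 + lam t * l3 t + c)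
       + 2 * w4 t ^ 1 * ((w4 t) ^ 2 + lam t * l4 t + c)
       + ((-(1/3) * ((l2 t - lam t) * w2 t + ((l3 t - lam t) * w3 t + (l4 t - lam t) * w4 t)))
            * (l2 t + (l3 t + l4 t))
          + lam t * ((l2 t - lam t) * w2 t + ((l3 t - lam t) * w3 t + (l4 t - lam t) * w4 t)))
       + 0 := by
    rw [hTF.deriv_eq]
    exact hF'.deriv
  rw [hd2, hlamd.deriv]
  have h4 : l4 t = -3 * lam t - l2 t - l3 t := by have := hsum t ht; linarith
  rw [h4]; ring
end

section
/- Let c be a real number and let κ, τ, λ₂, λ₃, λ₄ : I → ℝ be differentiable functions on an open interval I such that λ₂(t), λ₃(t), λ₄(t) are pairwise distinct for every t. Set λ = -(λ₂+λ₃+λ₄)/3 and ωᵢ = κλᵢ + τ. If for each i = 2,3,4 one has λᵢ' = (λᵢ - λ)ωᵢ and (κλᵢ + τ)' = (κλᵢ + τ)² + λλᵢ + c on I, then κ' = -(1/3)(1 + κ²)(λ₂+λ₃+λ₄) + κτ and τ' = c - (1/3)κτ(λ₂+λ₃+λ₄) + τ² on I. -/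
theorem kappa_tau_derivatives (c : ℝ) (I : Set ℝ) (hI : IsOpen I)
    (κ τ l2 l3 l4 : ℝ → ℝ)
    (hκ : DifferentiableOn ℝ κ I) (hτ : DifferentiableOn ℝ τ I)
    (hdist : ∀ t ∈ I, l2 t ≠ l3 t ∧ l2 t ≠ l4 t ∧ l3 t ≠ l4 t)
    (lam : ℝ → ℝ) (hlam : ∀ t, lam t = -(l2 t + l3 t + l4 t) / 3)
    (hdl2 : ∀ t ∈ I, HasDerivAt l2 ((l2 t - lam t) * (κ t * l2 t + τ t)) t)
    (hdl3 : ∀ t ∈ I, HasDerivAt l3 ((l3 t - lam t) * (κ t * l3 t + τ t)) t)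
    (hdl4 : ∀ t ∈ I, HasDerivAt l4 ((l4 t - lam t) * (κ t * l4 t + τ t)) t)
    (hw2 : ∀ t ∈ I, HasDerivAt (fun s => κ s * l2 s + τ s)
      ((κ t * l2 t + τ t) ^ 2 + lam t * l2 t + c) t)
    (hw3 : ∀ t ∈ I, HasDerivAt (fun s => κ s * l3 s + τ s)
      ((κ t * l3 t + τ t) ^ 2 + lam t * l3 t + c) t)
    (hw4 : ∀ t ∈ I, HasDerivAt (fun s => κ s * l4 s + τ s)
      ((κ t * l4 t + τ t) ^ 2 + lam t * l4 t + c) t) :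
    ∀ t ∈ I,
      deriv κ t = -(1 / 3) * (1 + (κ t) ^ 2) * (l2 t + l3 t + l4 t) + κ t * τ t ∧
      deriv τ t = c - (1 / 3) * κ t * τ t * (l2 t + l3 t + l4 t) + (τ t) ^ 2 := by
  intro t ht
  have hmem := hI.mem_nhds ht
  have hκ' : HasDerivAt κ (deriv κ t) t :=
    (hκ.differentiableAt hmem).hasDerivAt
  have hτ' : HasDerivAt τ (deriv τ t) t :=
    (hτ.differentiableAt hmem).hasDerivAt
  have e2 : deriv κ t * l2 t + κ t * ((l2 t - lam t) * (κ t * l2 t + τ t)) + deriv τ t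
      = (κ t * l2 t + τ t) ^ 2 + lam t * l2 t + c :=
    ((hκ'.mul (hdl2 t ht)).add hτ').unique (hw2 t ht)
  have e3 : deriv κ t * l3 t + κ t * ((l3 t - lam t) * (κ t * l3 t + τ t)) + deriv τ t
      = (κ t * l3 t + τ t) ^ 2 + lam t * l3 t + c :=
    ((hκ'.mul (hdl3 t ht)).add hτ').unique (hw3 t ht)
  have hne : l2 t - l3 t ≠ 0 := sub_ne_zero.2 (hdist t ht).1
  have key : (deriv κ t - (κ t * τ t + lam t * (1 + (κ t) ^ 2))) * (l2 t - l3 t) = 0 := by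
    ring_nf
    nlinarith [e2, e3]
  have hk : deriv κ t = κ t * τ t + lam t * (1 + (κ t) ^ 2) := by
    have := (mul_eq_zero.1 key).resolve_right hne
    linarith
  have ht' : deriv τ t = c + (τ t) ^ 2 + κ t * lam t * τ t := by
    linear_combination e2 - l2 t * hk
  rw [hlam t] at hk ht'
  constructor <;> [nlinarith [hk]; nlinarith [ht']]
end

section
/- Let c be a real number and λ : I → ℝ a four times differentiable function on an open interval I with λ(t) ≠ 0 and λ'(t) ≠ 0 for all t ∈ I. Then λ cannot satisfy both 62λλ'' - 109(λ')² + 192λ⁴ - 48cλ² = 0 and 44λ²λ''' - 124λλ'λ'' + 550λ⁴λ' + 18(λ')³ - 142cλ²λ' = 0 on all of I. -/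
/-- If a function vanishes on an open set, its derivative vanishes there too. -/
lemma deriv_eq_zero_of_eqOn_zero {f : ℝ → ℝ} {I : Set ℝ} (hI : IsOpen I)
    (hf : ∀ t ∈ I, f t = 0) {t : ℝ} (ht : t ∈ I) : deriv f t = 0 := by
  have h : f =ᶠ[nhds t] fun _ => (0 : ℝ) := by
    filter_upwards [hI.mem_nhds ht] using hf
  rw [h.deriv_eq, deriv_const]

theorem lemma34_case_ii (c : ℝ) (I : Set ℝ) (hI : IsOpen I) (hne : I.Nonempty)
    (lam : ℝ → ℝ) (hsm : ContDiffOn ℝ 4 lam I)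
    (hlam : ∀ t ∈ I, lam t ≠ 0) (hlam' : ∀ t ∈ I, deriv lam t ≠ 0) :
    ¬ ((∀ t ∈ I,
        62 * lam t * deriv (deriv lam) t - 109 * (deriv lam t) ^ 2
          + 192 * (lam t) ^ 4 - 48 * c * (lam t) ^ 2 = 0) ∧
      (∀ t ∈ I,
        44 * (lam t) ^ 2 * deriv (deriv (deriv lam)) t
          - 124 * lam t * deriv lam t * deriv (deriv lam) t
          + 550 * (lam t) ^ 4 * deriv lam t + 18 * (deriv lam t) ^ 3
          - 142 * c * (lam t) ^ 2 * deriv lam t = 0)) := by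
  rintro ⟨hE1, hE2⟩
  -- differentiability facts
  have hd0 : ContDiffOn ℝ 1 lam I := hsm.of_le (by norm_num)
  have hd1 : ContDiffOn ℝ 2 (deriv lam) I := hsm.deriv_of_isOpen hI (by norm_num)
  have hd2 : ContDiffOn ℝ 1 (deriv (deriv lam)) I :=
    hd1.deriv_of_isOpen hI (by norm_num)
  have hL : ∀ t ∈ I, HasDerivAt lam (deriv lam t) t := fun t ht =>
    ((hd0.differentiableOn (by norm_num)).differentiableAt (hI.mem_nhds ht)).hasDerivAt
  have hL1 : ∀ t ∈ I, HasDerivAt (deriv lam) (deriv (deriv lam) t) t := fun t ht =>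
    ((hd1.differentiableOn (by norm_num)).differentiableAt (hI.mem_nhds ht)).hasDerivAt
  have hL2 : ∀ t ∈ I, HasDerivAt (deriv (deriv lam)) (deriv (deriv (deriv lam)) t) t :=
    fun t ht =>
    ((hd2.differentiableOn (by norm_num)).differentiableAt (hI.mem_nhds ht)).hasDerivAt
  -- derivative of E1 vanishes on I
  have hE3 : ∀ t ∈ I,
      62 * deriv lam t * deriv (deriv lam) t
        + 62 * lam t * deriv (deriv (deriv lam)) t
        - 218 * deriv lam t * deriv (deriv lam) t
        + 768 * (lam t) ^ 3 * deriv lam t - 96 * c * lam t * deriv lam t = 0 := by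
    intro t ht
    have hder : HasDerivAt (fun s => 62 * lam s * deriv (deriv lam) s
        - 109 * (deriv lam s) ^ 2 + 192 * (lam s) ^ 4 - 48 * c * (lam s) ^ 2)
        (62 * deriv lam t * deriv (deriv lam) t
          + 62 * lam t * deriv (deriv (deriv lam)) t
          - 218 * deriv lam t * deriv (deriv lam) t
          + 768 * (lam t) ^ 3 * deriv lam t - 96 * c * lam t * deriv lam t) t := by
      have h1 := (((hL t ht).const_mul (62 : ℝ)).mul (hL2 t ht))
      have h2 := ((hL1 t ht).pow 2).const_mul (109 : ℝ)
      have h3 := ((hL t ht).pow 4).const_mul (192 : ℝ)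
      have h4 := ((hL t ht).pow 2).const_mul (48 * c)
      have := ((h1.sub h2).add h3).sub h4
      convert this using 1
      · rfl
      · rfl
      · ext s; simp only [Pi.mul_apply, Pi.sub_apply, Pi.add_apply, Pi.pow_apply]
      · push_cast; ring
    have h0 : deriv (fun s => 62 * lam s * deriv (deriv lam) s
        - 109 * (deriv lam s) ^ 2 + 192 * (lam s) ^ 4 - 48 * c * (lam s) ^ 2) t = 0 :=
      deriv_eq_zero_of_eqOn_zero hI hE1 ht
    rw [hder.deriv] at h0
    exact h0
  -- eliminate λ''' and λ'': E5 on I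
  have hE5 : ∀ t ∈ I, 2578 * (deriv lam t) ^ 2 - 22163 * (lam t) ^ 4
      + 40439 * c * (lam t) ^ 2 = 0 := by
    intro t ht
    have h1 := hE1 t ht
    have h2 := hE2 t ht
    have h3 := hE3 t ht
    -- 44 λ · E3 - 62 · E2 = λ' · (824 λλ'' - 308 λ⁴ - 1116 λ'² + 4580 c λ²)
    have h4 : deriv lam t * (824 * lam t * deriv (deriv lam) t
        - 308 * (lam t) ^ 4 - 1116 * (deriv lam t) ^ 2 + 4580 * c * (lam t) ^ 2) = 0 := by
      linear_combination (44 * lam t) * h3 - 62 * h2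
    have h5 : 824 * lam t * deriv (deriv lam) t - 308 * (lam t) ^ 4
        - 1116 * (deriv lam t) ^ 2 + 4580 * c * (lam t) ^ 2 = 0 :=
      (mul_eq_zero.mp h4).resolve_left (hlam' t ht)
    linear_combination (31 / 4 : ℝ) * h5 - 103 * h1
  -- derivative of E5 vanishes on I
  have hE6 : ∀ t ∈ I, 5156 * lam t * deriv (deriv lam) t - 88652 * (lam t) ^ 4
      + 80878 * c * (lam t) ^ 2 = 0 := by
    intro t ht
    have hder : HasDerivAt (fun s => 2578 * (deriv lam s) ^ 2 - 22163 * (lam s) ^ 4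
        + 40439 * c * (lam s) ^ 2)
        (5156 * deriv lam t * deriv (deriv lam) t - 88652 * (lam t) ^ 3 * deriv lam t
          + 80878 * c * lam t * deriv lam t) t := by
      have h1 := ((hL1 t ht).pow 2).const_mul (2578 : ℝ)
      have h2 := ((hL t ht).pow 4).const_mul (22163 : ℝ)
      have h3 := ((hL t ht).pow 2).const_mul (40439 * c)
      have := (h1.sub h2).add h3
      convert this using 1
      · rfl
      · rfl
      · ext s; simp only [Pi.mul_apply, Pi.sub_apply, Pi.add_apply, Pi.pow_apply]
      · push_cast; ring
    have h0 : deriv (fun s => 2578 * (deriv lam s) ^ 2 - 22163 * (lam s) ^ 4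
        + 40439 * c * (lam s) ^ 2) t = 0 :=
      deriv_eq_zero_of_eqOn_zero hI hE5 ht
    rw [hder.deriv] at h0
    have h4 : deriv lam t * (5156 * lam t * deriv (deriv lam) t
        - 88652 * (lam t) ^ 4 + 80878 * c * (lam t) ^ 2) = 0 := by
      linear_combination lam t * h0
    exact (mul_eq_zero.mp h4).resolve_left (hlam' t ht)
  -- eliminate λ'': combine E6 with E1 and E5 to get 827421 λ² + 1776889 c = 0 on I
  have hE8 : ∀ t ∈ I, 827421 * (lam t) ^ 2 + 1776889 * c = 0 := by
    intro t ht
    have h1 := hE1 t ht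
    have h5 := hE5 t ht
    have h6 := hE6 t ht
    -- E7 : 140501 λ'² - 1621594 λ⁴ + 1315481 c λ² = 0
    have h7 : 140501 * (deriv lam t) ^ 2 - 1621594 * (lam t) ^ 4
        + 1315481 * c * (lam t) ^ 2 = 0 := by
      linear_combination (31 / 2 : ℝ) * h6 - 1289 * h1
    have h8 : (lam t) ^ 2 * (827421 * (lam t) ^ 2 + 1776889 * c) = 0 := by
      linear_combination (140501 / 1289 : ℝ) * h5 - (2 / 1 : ℝ) * h7
    exact (mul_eq_zero.mp h8).resolve_left (pow_ne_zero 2 (hlam t ht))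
  -- differentiate: 1654842 λ λ' = 0, contradiction
  obtain ⟨t, ht⟩ := hne
  have hder : HasDerivAt (fun s => 827421 * (lam s) ^ 2 + 1776889 * c)
      (1654842 * lam t * deriv lam t) t := by
    have h1 := ((hL t ht).pow 2).const_mul (827421 : ℝ)
    have := h1.add_const (1776889 * c)
    convert this using 1
    · rfl
    · rfl
    · ext s; simp only [Pi.mul_apply, Pi.sub_apply, Pi.add_apply, Pi.pow_apply]
    · push_cast; ring
  have h0 : deriv (fun s => 827421 * (lam s) ^ 2 + 1776889 * c) t = 0 :=
    deriv_eq_zero_of_eqOn_zero hI hE8 ht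
  rw [hder.deriv] at h0
  have := mul_ne_zero (mul_ne_zero (by norm_num : (1654842 : ℝ) ≠ 0) (hlam t ht)) (hlam' t ht)
  exact this h0
end
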